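/- For a pointed topological space (X,x) and integers n ≥ 1 and 1 ≤ k ≤ n−1, the n-th quasitopological homotopy group π_n^{qtop}(X,x) is isomorphic as a quasitopological group to π_{n−k}^{qtop}(Ω^k(X,x), e_x), where e_x is the constant k-loop at x. -/

import Mathlib

open Topology.Homotopy unitInterval

noncomputable section

/-- The quotient topology on `πₙ(X,x)` induced by the natural surjection
`q : Ωⁿ(X,x) → πₙ(X,x)` from the `n`-th loop space (with the compact-open topology);
with this topology `πₙ(X,x)` is the quasitopological homotopy group `πₙ^{qtop}(X,x)`. -/
instance piQTop (N X : Type*) [TopologicalSpace X] (x : X) :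
    TopologicalSpace (HomotopyGroup N X x) :=
  inferInstanceAs (TopologicalSpace (Quotient _))

namespace QAux

open GenLoop Topology

variable {X : Type*} [TopologicalSpace X] {x : X} {N N' M K : Type*}

/-! ### Quotient glue -/

/-- Transport a homeomorphism compatible with setoids to an equivalence of quotients. -/
def quotCongr {Y Z : Type*} [TopologicalSpace Y] [TopologicalSpace Z]
    [sy : Setoid Y] [sz : Setoid Z] (F : Y ≃ₜ Z)
    (h : ∀ a b : Y, a ≈ b ↔ F a ≈ F b) : Quotient sy ≃ Quotient sz where
  toFun := Quotient.map F fun a b hab => (h a b).1 hab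
  invFun := Quotient.map F.symm fun a b hab =>
    (h _ _).2 (by simpa only [F.apply_symm_apply] using hab)
  left_inv := by rintro ⟨a⟩; exact congrArg (Quotient.mk sy) (F.symm_apply_apply a)
  right_inv := by rintro ⟨a⟩; exact congrArg (Quotient.mk sz) (F.apply_symm_apply a)

theorem quotCongr_mk {Y Z : Type*} [TopologicalSpace Y] [TopologicalSpace Z]
    [sy : Setoid Y] [sz : Setoid Z] (F : Y ≃ₜ Z)
    (h : ∀ a b : Y, a ≈ b ↔ F a ≈ F b) (a : Y) :
    quotCongr F h (Quotient.mk sy a) = Quotient.mk sz (F a) := rfl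

theorem isHomeomorph_quotCongr {Y Z : Type*} [TopologicalSpace Y] [TopologicalSpace Z]
    [sy : Setoid Y] [sz : Setoid Z] (F : Y ≃ₜ Z)
    (h : ∀ a b : Y, a ≈ b ↔ F a ≈ F b) : IsHomeomorph (quotCongr F h) := by
  have hc : Continuous (quotCongr F h) :=
    F.continuous.quotient_map' fun a b hab => (h a b).1 hab
  have hc' : Continuous (quotCongr F h).symm :=
    F.symm.continuous.quotient_map' fun a b hab =>
      (h _ _).2 (by simpa only [F.apply_symm_apply] using hab)
  exact (Homeomorph.mk (quotCongr F h) hc hc').isHomeomorph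

/-! ### Relabeling of coordinates -/

/-- Precomposition with a relabeling as a continuous map of cubes. -/
def rlCM (e : N ≃ N') : C(I^N', I^N) :=
  ⟨fun t => t ∘ e, continuous_pi fun i => continuous_apply (e i)⟩

/-- Relabeling the coordinates of a generalized loop. -/
def rl (e : N ≃ N') (p : Ω^ N X x) : Ω^ N' X x :=
  ⟨p.1.comp (rlCM e), by
    rintro y ⟨i, hi⟩
    refine p.2 ((rlCM e) y) ⟨e.symm i, ?_⟩
    show y (e (e.symm i)) = 0 ∨ y (e (e.symm i)) = 1
    rwa [e.apply_symm_apply]⟩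

@[simp] theorem rl_apply (e : N ≃ N') (p : Ω^ N X x) (y : I^N') :
    rl e p y = p (y ∘ e) := rfl

theorem rl_rl (e : N ≃ N') (p : Ω^ N X x) : rl e.symm (rl e p) = p := by
  apply GenLoop.ext; intro y
  exact congr_arg p (funext fun j => congr_arg y (e.symm_apply_apply j))

theorem rl_rl' (e : N ≃ N') (q : Ω^ N' X x) : rl e (rl e.symm q) = q := by
  have := rl_rl e.symm q; rwa [Equiv.symm_symm] at this

theorem continuous_rl (e : N ≃ N') : Continuous (rl e : Ω^ N X x → Ω^ N' X x) := by
  have h1 : Continuous fun p : Ω^ N X x => (p : C(I^N, X)).comp (rlCM e) :=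
    (ContinuousMap.continuous_precomp (rlCM e)).comp continuous_subtype_val
  exact h1.subtype_mk _

/-- Relabeling as a homeomorphism of loop spaces. -/
def rlHomeo (e : N ≃ N') : (Ω^ N X x) ≃ₜ Ω^ N' X x where
  toFun := rl e
  invFun := rl e.symm
  left_inv := rl_rl e
  right_inv := rl_rl' e
  continuous_toFun := continuous_rl e
  continuous_invFun := continuous_rl e.symm

theorem homotopic_rl (e : N ≃ N') {p q : Ω^ N X x} (h : Homotopic p q) :
    Homotopic (rl e p) (rl e q) := by
  refine h.map fun H => ?_
  refine ⟨⟨H.toContinuousMap.comp ((ContinuousMap.id I).prodMap (rlCM e)),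
    fun y => H.apply_zero _, fun y => H.apply_one _⟩, fun t y hy => ?_⟩
  obtain ⟨i, hi⟩ := hy
  refine H.eq_fst t ⟨e.symm i, ?_⟩
  show y (e (e.symm i)) = 0 ∨ y (e (e.symm i)) = 1
  rwa [e.apply_symm_apply]

theorem homotopic_rl_iff (e : N ≃ N') {p q : Ω^ N X x} :
    Homotopic (rl e p) (rl e q) ↔ Homotopic p q :=
  ⟨fun h => by simpa only [rl_rl] using homotopic_rl e.symm h, homotopic_rl e⟩

theorem transAt_apply [DecidableEq N] (i : N) (f g : Ω^ N X x) (t : I^N) :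
    transAt i f g t =
      if (t i : ℝ) ≤ 1 / 2
      then f (Function.update t i <| Set.projIcc 0 1 zero_le_one (2 * t i))
      else g (Function.update t i <| Set.projIcc 0 1 zero_le_one (2 * t i - 1)) := rfl

theorem rl_transAt [DecidableEq N] [DecidableEq N'] (e : N ≃ N') (i : N) (f g : Ω^ N X x) :
    rl e (transAt i f g) = transAt (e i) (rl e f) (rl e g) := by
  apply GenLoop.ext; intro y
  rw [rl_apply, transAt_apply, transAt_apply]
  simp only [rl_apply, Function.update_comp_equiv, Equiv.symm_apply_apply,
    Function.comp_apply]

/-! ### Currying -/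

/-- The splitting homeomorphism of cubes. -/
def sp (M K : Type*) : (I^(M ⊕ K)) ≃ₜ (I^M) × (I^K) :=
  Homeomorph.sumArrowHomeomorphProdArrow

/-- Curry a generalized loop indexed by `M ⊕ K` into a generalized loop of generalized
loops. -/
def toG (p : Ω^ (M ⊕ K) X x) : Ω^ M (Ω^ K X x) const :=
  have hbd : ∀ t : I^M, (p.1.comp (⟨(sp M K).symm, (sp M K).symm.continuous⟩ : C((I^M) × (I^K), I^(M ⊕ K)))).curry t ∈ Ω^ K X x :=
    fun t s hs => hs.elim fun i hi => p.2 (Sum.elim t s) ⟨Sum.inr i, hi⟩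
  ⟨⟨fun t => ⟨(p.1.comp (⟨(sp M K).symm, (sp M K).symm.continuous⟩ : C((I^M) × (I^K), I^(M ⊕ K)))).curry t, hbd t⟩,
    ((p.1.comp (⟨(sp M K).symm, (sp M K).symm.continuous⟩ : C((I^M) × (I^K), I^(M ⊕ K)))).curry).continuous.subtype_mk hbd⟩,
    fun t ht => ht.elim fun i hi =>
      GenLoop.ext _ _ fun s => p.2 (Sum.elim t s) ⟨Sum.inl i, hi⟩⟩

@[simp] theorem toG_apply (p : Ω^ (M ⊕ K) X x) (t : I^M) (s : I^K) :
    toG p t s = p (Sum.elim t s) := rfl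

/-- Uncurry a generalized loop of generalized loops. -/
def fromG (q : Ω^ M (Ω^ K X x) const) : Ω^ (M ⊕ K) X x :=
  ⟨(((⟨Subtype.val, continuous_subtype_val⟩ : C(Ω^ K X x, C(I^K, X))).comp
      q.1).uncurry).comp (⟨sp M K, (sp M K).continuous⟩ : C(I^(M ⊕ K), (I^M) × (I^K))), by
    rintro y ⟨i | i, hi⟩
    · show (q.1 (y ∘ Sum.inl) : C(I^K, X)) (y ∘ Sum.inr) = x
      rw [q.2 (y ∘ Sum.inl) ⟨i, hi⟩]; rfl
    · exact (q.1 (y ∘ Sum.inl)).2 (y ∘ Sum.inr) ⟨i, hi⟩⟩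

@[simp] theorem fromG_apply (q : Ω^ M (Ω^ K X x) const) (y : I^(M ⊕ K)) :
    fromG q y = (q.1 (y ∘ Sum.inl) : C(I^K, X)) (y ∘ Sum.inr) := rfl

/-- The currying homeomorphism of loop spaces. -/
def cgHomeo : (Ω^ (M ⊕ K) X x) ≃ₜ Ω^ M (Ω^ K X x) const where
  toFun := toG
  invFun := fromG
  left_inv p := by
    apply GenLoop.ext; intro y
    exact congr_arg p ((sp M K).symm_apply_apply y)
  right_inv q := by
    apply GenLoop.ext; intro t; apply GenLoop.ext; intro s
    exact congr_arg (fun z : (I^M) × (I^K) => (q.1 z.1 : C(I^K, X)) z.2)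
      ((sp M K).apply_symm_apply (t, s))
  continuous_toFun := by
    have h1 : Continuous fun p : Ω^ (M ⊕ K) X x =>
        ((p : C(I^(M ⊕ K), X)).comp (⟨(sp M K).symm, (sp M K).symm.continuous⟩ : C((I^M) × (I^K), I^(M ⊕ K)))).curry :=
      ContinuousMap.continuous_curry.comp
        ((ContinuousMap.continuous_precomp _).comp continuous_subtype_val)
    have h2 : Continuous fun z : (Ω^ (M ⊕ K) X x) × (I^M) =>
        ((z.1 : C(I^(M ⊕ K), X)).comp (⟨(sp M K).symm, (sp M K).symm.continuous⟩ : C((I^M) × (I^K), I^(M ⊕ K)))).curry z.2 :=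
      continuous_eval.comp (h1.prodMap continuous_id)
    have h3 : Continuous
        (Function.uncurry fun (p : Ω^ (M ⊕ K) X x) (t : I^M) => (toG p).1 t) :=
      h2.subtype_mk fun z => ((toG z.1).1 z.2).2
    exact Continuous.subtype_mk
      (ContinuousMap.continuous_of_continuous_uncurry (fun p => (toG p).1) h3)
      fun p => (toG p).2
  continuous_invFun := by
    have h1 : Continuous fun q : Ω^ M (Ω^ K X x) const =>
        ((((⟨Subtype.val, continuous_subtype_val⟩ : C(Ω^ K X x, C(I^K, X))).comp
          (q : C(I^M, Ω^ K X x))).uncurry).comp (⟨sp M K, (sp M K).continuous⟩ : C(I^(M ⊕ K), (I^M) × (I^K)))) :=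
      (ContinuousMap.continuous_precomp _).comp
        (ContinuousMap.continuous_uncurry.comp
          ((ContinuousMap.continuous_postcomp _).comp continuous_subtype_val))
    exact h1.subtype_mk fun q => (fromG q).2

theorem homotopic_toG {p q : Ω^ (M ⊕ K) X x} (h : Homotopic p q) :
    Homotopic (toG p) (toG q) := by
  refine h.map fun H => ?_
  let G : C(I × I^M, C(I^K, X)) :=
    ((⟨ContinuousMap.curry, ContinuousMap.continuous_curry⟩ :
        C(C((I^M) × (I^K), X), C(I^M, C(I^K, X)))).comp
      ((⟨fun f => f.comp (⟨(sp M K).symm, (sp M K).symm.continuous⟩ : C((I^M) × (I^K), I^(M ⊕ K))),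
          ContinuousMap.continuous_precomp _⟩ :
        C(C(I^(M ⊕ K), X), C((I^M) × (I^K), X))).comp
        H.toContinuousMap.curry)).uncurry
  have hbd : ∀ z : I × (I^M), G z ∈ Ω^ K X x := by
    rintro z s ⟨i, hi⟩
    exact (H.eq_fst z.1 ⟨Sum.inr i, hi⟩).trans (p.2 _ ⟨Sum.inr i, hi⟩)
  exact ⟨⟨⟨fun z => ⟨G z, hbd z⟩, G.continuous.subtype_mk hbd⟩,
    fun u => GenLoop.ext _ _ fun s => H.apply_zero (Sum.elim u s),
    fun u => GenLoop.ext _ _ fun s => H.apply_one (Sum.elim u s)⟩,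
    fun t u hu => hu.elim fun i hi =>
      GenLoop.ext _ _ fun s => H.eq_fst t ⟨Sum.inl i, hi⟩⟩

theorem homotopic_of_toG {p q : Ω^ (M ⊕ K) X x}
    (h : Homotopic (toG p) (toG q)) : Homotopic p q := by
  refine h.map fun H => ?_
  let G : C(I × I^(M ⊕ K), X) :=
    (((⟨ContinuousMap.uncurry, ContinuousMap.continuous_uncurry⟩ :
        C(C(I^M, C(I^K, X)), C((I^M) × (I^K), X))).comp
      ((⟨fun f => (⟨Subtype.val, continuous_subtype_val⟩ :
            C(Ω^ K X x, C(I^K, X))).comp f,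
          ContinuousMap.continuous_postcomp _⟩ :
        C(C(I^M, Ω^ K X x), C(I^M, C(I^K, X)))).comp
        H.toContinuousMap.curry)).uncurry).comp
      ((ContinuousMap.id I).prodMap (⟨sp M K, (sp M K).continuous⟩ : C(I^(M ⊕ K), (I^M) × (I^K))))
  refine ⟨⟨G, fun y => ?_, fun y => ?_⟩, fun t y hy => ?_⟩
  · show ((H (0, y ∘ Sum.inl) : Ω^ K X x) : C(I^K, X)) (y ∘ Sum.inr) = p.1 y
    rw [H.apply_zero]
    exact congr_arg p ((sp M K).symm_apply_apply y)
  · show ((H (1, y ∘ Sum.inl) : Ω^ K X x) : C(I^K, X)) (y ∘ Sum.inr) = q.1 y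
    rw [H.apply_one]
    exact congr_arg q ((sp M K).symm_apply_apply y)
  · obtain ⟨i | i, hi⟩ := hy
    · show ((H (t, y ∘ Sum.inl) : Ω^ K X x) : C(I^K, X)) (y ∘ Sum.inr) = p.1 y
      rw [H.eq_fst t ⟨i, hi⟩]
      exact congr_arg p ((sp M K).symm_apply_apply y)
    · show ((H (t, y ∘ Sum.inl) : Ω^ K X x) : C(I^K, X)) (y ∘ Sum.inr) = p.1 y
      exact ((H (t, y ∘ Sum.inl)).2 (y ∘ Sum.inr) ⟨i, hi⟩).trans
        (p.2 y ⟨Sum.inr i, hi⟩).symm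

theorem homotopic_toG_iff {p q : Ω^ (M ⊕ K) X x} :
    Homotopic (toG p) (toG q) ↔ Homotopic p q :=
  ⟨homotopic_of_toG, homotopic_toG⟩

theorem toG_transAt [DecidableEq M] [DecidableEq K] (i : M) (f g : Ω^ (M ⊕ K) X x) :
    toG (transAt (Sum.inl i) f g) = transAt i (toG f) (toG g) := by
  apply GenLoop.ext; intro t; apply GenLoop.ext; intro s
  rw [toG_apply, transAt_apply, transAt_apply,
    apply_ite (fun r : Ω^ K X x => r s)]
  simp only [Sum.elim_inl, Sum.update_elim_inl, toG_apply]

end QAux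

/-- For a pointed space `(X,x)` and `n ≥ 1`, `1 ≤ k ≤ n-1`, the quasitopological
homotopy group `πₙ^{qtop}(X,x)` is isomorphic, as a quasitopological group (i.e. via a
group isomorphism which is also a homeomorphism), to
`π_{n-k}^{qtop}(Ω^k(X,x), e_x)`, where `Ω^k(X,x) = GenLoop (Fin k) X x` is the `k`-th
loop space with the compact-open topology and `e_x` is the constant `k`-loop at `x`. -/
theorem stmt0 (X : Type) [TopologicalSpace X] (x : X) (n k : ℕ)
    (hk : 1 ≤ k) (hkn : k ≤ n - 1) :
    letI : Nonempty (Fin n) := ⟨⟨0, by omega⟩⟩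
    letI : Nonempty (Fin (n - k)) := ⟨⟨0, by omega⟩⟩
    ∃ e : HomotopyGroup (Fin n) X x ≃
        HomotopyGroup (Fin (n - k)) (GenLoop (Fin k) X x) GenLoop.const,
      (∀ a b, e (a * b) = e a * e b) ∧ IsHomeomorph e := by
  letI : Nonempty (Fin n) := ⟨⟨0, by omega⟩⟩
  letI : Nonempty (Fin (n - k)) := ⟨⟨0, by omega⟩⟩
  have hsum : (n - k) + k = n := by omega
  let e₀ : Fin n ≃ (Fin (n - k) ⊕ Fin k) :=
    (finCongr hsum).symm.trans finSumFinEquiv.symm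
  let F : (GenLoop (Fin n) X x) ≃ₜ
      GenLoop (Fin (n - k)) (GenLoop (Fin k) X x) GenLoop.const :=
    (QAux.rlHomeo e₀).trans QAux.cgHomeo
  have hiff : ∀ p q : GenLoop (Fin n) X x, p ≈ q ↔ F p ≈ F q := fun p q => by
    show GenLoop.Homotopic p q ↔
      GenLoop.Homotopic (QAux.toG (QAux.rl e₀ p)) (QAux.toG (QAux.rl e₀ q))
    rw [QAux.homotopic_toG_iff, QAux.homotopic_rl_iff]
  let E : HomotopyGroup (Fin n) X x ≃
      HomotopyGroup (Fin (n - k)) (GenLoop (Fin k) X x) GenLoop.const :=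
    QAux.quotCongr F hiff
  have hEmk : ∀ a : GenLoop (Fin n) X x, E ⟦a⟧ = ⟦F a⟧ := fun a => rfl
  refine ⟨E, fun a b => ?_, QAux.isHomeomorph_quotCongr F hiff⟩
  refine Quotient.inductionOn₂ a b fun p q => ?_
  let j₀ : Fin (n - k) := ⟨0, by omega⟩
  let i₀ : Fin n := e₀.symm (Sum.inl j₀)
  have hF : F (GenLoop.transAt i₀ q p) = GenLoop.transAt j₀ (F q) (F p) := by
    show QAux.toG (QAux.rl e₀ (GenLoop.transAt i₀ q p)) = _
    rw [QAux.rl_transAt, show e₀ i₀ = Sum.inl j₀ from e₀.apply_symm_apply _,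
      QAux.toG_transAt]
    rfl
  have h1 := HomotopyGroup.mul_spec (x := x) (i := i₀) (p := p) (q := q)
  have h2 := HomotopyGroup.mul_spec (X := GenLoop (Fin k) X x) (x := GenLoop.const)
    (i := j₀) (p := F p) (q := F q)
  let mkn : GenLoop (Fin n) X x → HomotopyGroup (Fin n) X x := Quotient.mk _
  let mkk : GenLoop (Fin (n - k)) (GenLoop (Fin k) X x) GenLoop.const →
      HomotopyGroup (Fin (n - k)) (GenLoop (Fin k) X x) GenLoop.const := Quotient.mk _
  show E (mkn p * mkn q) = E (mkn p) * E (mkn q)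
  calc E (mkn p * mkn q)
      = E (mkn (GenLoop.transAt i₀ q p)) := congrArg E h1
    _ = mkk (F (GenLoop.transAt i₀ q p)) := rfl
    _ = mkk (GenLoop.transAt j₀ (F q) (F p)) := by rw [hF]
    _ = E (mkn p) * E (mkn q) := h2.symm
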